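/- Let a, t : L → L be as above and let τ = a ∘ t. Then τ is given on the basis by τ(ℓ) = 2f + 2(e₁+e₉) − (e₂+e₃) + e₇, τ(e₁) = e₉, τ(e_j) = f − e_j + e₁ + e₉ for j = 2,3, τ(eᵢ) = f − ℓ + eᵢ + e₁ + e₇ + e₉ for i = 4,5,6, τ(e₇) = ℓ − e₂ − e₃, τ(e₈) = f − ℓ + e₁ + e₇ + e₈ + e₉, τ(e₉) = e₁ (the τ_B column of Table 1 of the paper); moreover τ ∘ τ = id, ⟨τ(x), τ(y)⟩ = ⟨x, y⟩ for all x, y ∈ L, and τ(f) = f. -/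

import Mathlib

/-! Statement 3: with `a = α_B^*` and `t = t_ζ^*` as in Table 1, the composite
`τ = a ∘ t` is given by the `τ_B` column of Table 1, is an involution,
preserves the intersection form, and fixes `f`. -/

noncomputable section

def el : Fin 10 → ℤ := Pi.single 0 1
def e1 : Fin 10 → ℤ := Pi.single 1 1
def e2 : Fin 10 → ℤ := Pi.single 2 1
def e3 : Fin 10 → ℤ := Pi.single 3 1
def e4 : Fin 10 → ℤ := Pi.single 4 1
def e5 : Fin 10 → ℤ := Pi.single 5 1
def e6 : Fin 10 → ℤ := Pi.single 6 1
def e7 : Fin 10 → ℤ := Pi.single 7 1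
def e8 : Fin 10 → ℤ := Pi.single 8 1
def e9 : Fin 10 → ℤ := Pi.single 9 1

/-- The intersection form: `⟨ℓ,ℓ⟩ = 1`, `⟨eᵢ,eⱼ⟩ = -δᵢⱼ`, `⟨ℓ,eᵢ⟩ = 0`. -/
def form (x y : Fin 10 → ℤ) : ℤ := 2 * x 0 * y 0 - ∑ i, x i * y i

def ff : Fin 10 → ℤ := (3 : ℤ) • el - (e1 + e2 + e3 + e4 + e5 + e6 + e7 + e8 + e9)
def n1 : Fin 10 → ℤ := e8 - e9
def o1 : Fin 10 → ℤ := ff - e8 + e9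
def n2 : Fin 10 → ℤ := el - e7 - e8 - e9
def o2 : Fin 10 → ℤ := (2 : ℤ) • el - (e1 + e2 + e3 + e4 + e5 + e6)

/-- The map `τ = a ∘ t`, written out explicitly in coordinates. -/
def gfun (x : Fin 10 → ℤ) (j : Fin 10) : ℤ :=
  if j = 0 then 6*x 0 + 3*x 2 + 3*x 3 + 2*x 4 + 2*x 5 + 2*x 6 + x 7 + 2*x 8
  else if j = 1 then x 9
  else if j = 2 then -3*x 0 - 2*x 2 - x 3 - x 4 - x 5 - x 6 - x 7 - x 8
  else if j = 3 then -3*x 0 - x 2 - 2*x 3 - x 4 - x 5 - x 6 - x 7 - x 8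
  else if j = 4 then -2*x 0 - x 2 - x 3 - x 5 - x 6 - x 8
  else if j = 5 then -2*x 0 - x 2 - x 3 - x 4 - x 6 - x 8
  else if j = 6 then -2*x 0 - x 2 - x 3 - x 4 - x 5 - x 8
  else if j = 7 then -(x 0) - x 2 - x 3
  else if j = 8 then -2*x 0 - x 2 - x 3 - x 4 - x 5 - x 6
  else x 1

def g : (Fin 10 → ℤ) →ₗ[ℤ] (Fin 10 → ℤ) where
  toFun := gfun
  map_add' x y := by funext j; fin_cases j <;> simp [gfun] <;> ring
  map_smul' c x := by funext j; fin_cases j <;> simp [gfun] <;> ring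

lemma sum10 (x : Fin 10 → ℤ) :
    ∑ i, x i = x 0 + (x 1 + (x 2 + (x 3 + (x 4 + (x 5 + (x 6 + (x 7 + (x 8 + x 9)))))))) := by
  simp [Fin.sum_univ_succ]

lemma basis_expand (x : Fin 10 → ℤ) :
    x = x 0 • el + x 1 • e1 + x 2 • e2 + x 3 • e3 + x 4 • e4 + x 5 • e5 + x 6 • e6
      + x 7 • e7 + x 8 • e8 + x 9 • e9 := by
  funext j
  fin_cases j <;>
    simp [el, e1, e2, e3, e4, e5, e6, e7, e8, e9, Pi.single_apply]

lemma g_el : g el = (2 : ℤ) • ff + (2 : ℤ) • (e1 + e9) - (e2 + e3) + e7 := by decide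
lemma g_e1 : g e1 = e9 := by decide
lemma g_e2 : g e2 = ff - e2 + e1 + e9 := by decide
lemma g_e3 : g e3 = ff - e3 + e1 + e9 := by decide
lemma g_e4 : g e4 = ff - el + e4 + e1 + e7 + e9 := by decide
lemma g_e5 : g e5 = ff - el + e5 + e1 + e7 + e9 := by decide
lemma g_e6 : g e6 = ff - el + e6 + e1 + e7 + e9 := by decide
lemma g_e7 : g e7 = el - e2 - e3 := by decide
lemma g_e8 : g e8 = ff - el + e1 + e7 + e8 + e9 := by decide
lemma g_e9 : g e9 = e1 := by decide
lemma g_ff : g ff = ff := by decide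

theorem stmt3 (a t : (Fin 10 → ℤ) →ₗ[ℤ] (Fin 10 → ℤ))
    (hal : a el = (3 : ℤ) • el - (e1 + e2 + e3 + (2 : ℤ) • e7 + e8))
    (ha1 : a e1 = el - e1 - e7) (ha2 : a e2 = el - e2 - e7) (ha3 : a e3 = el - e3 - e7)
    (ha4 : a e4 = e4) (ha5 : a e5 = e5) (ha6 : a e6 = e6)
    (ha7 : a e7 = (2 : ℤ) • el - (e1 + e2 + e3 + e7 + e8))
    (ha8 : a e8 = el - e7 - e8) (ha9 : a e9 = e9)
    (htl : t el = (2 : ℤ) • ff + (2 : ℤ) • el - (3 : ℤ) • e1 - e7 - e8 + (2 : ℤ) • e9)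
    (ht1 : t e1 = e9)
    (ht2 : t e2 = ff + e2 - e1 + e9) (ht3 : t e3 = ff + e3 - e1 + e9)
    (ht4 : t e4 = ff + e4 - e1 + e9) (ht5 : t e5 = ff + e5 - e1 + e9)
    (ht6 : t e6 = ff + e6 - e1 + e9)
    (ht7 : t e7 = el - e1 - e8)
    (ht8 : t e8 = ff + el + e9 - e1 - e7 - e8)
    (ht9 : t e9 = el - e1 - e7) :
    (a ∘ₗ t) el = (2 : ℤ) • ff + (2 : ℤ) • (e1 + e9) - (e2 + e3) + e7 ∧
    (a ∘ₗ t) e1 = e9 ∧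
    (a ∘ₗ t) e2 = ff - e2 + e1 + e9 ∧
    (a ∘ₗ t) e3 = ff - e3 + e1 + e9 ∧
    (a ∘ₗ t) e4 = ff - el + e4 + e1 + e7 + e9 ∧
    (a ∘ₗ t) e5 = ff - el + e5 + e1 + e7 + e9 ∧
    (a ∘ₗ t) e6 = ff - el + e6 + e1 + e7 + e9 ∧
    (a ∘ₗ t) e7 = el - e2 - e3 ∧
    (a ∘ₗ t) e8 = ff - el + e1 + e7 + e8 + e9 ∧
    (a ∘ₗ t) e9 = e1 ∧
    (∀ x, (a ∘ₗ t) ((a ∘ₗ t) x) = x) ∧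
    (∀ x y, form ((a ∘ₗ t) x) ((a ∘ₗ t) y) = form x y) ∧
    (a ∘ₗ t) ff = ff := by
  have haf : a ff = ff := by
    simp only [ff, map_sub, map_add, map_smul, hal, ha1, ha2, ha3, ha4, ha5, ha6, ha7, ha8, ha9]
    module
  have c0 : (a ∘ₗ t) el = (2 : ℤ) • ff + (2 : ℤ) • (e1 + e9) - (e2 + e3) + e7 := by
    simp only [LinearMap.comp_apply, htl, map_add, map_sub, map_smul, haf, hal, ha1, ha7, ha8, ha9]
    module
  have c1 : (a ∘ₗ t) e1 = e9 := by
    simp only [LinearMap.comp_apply, ht1, ha9]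
  have c2 : (a ∘ₗ t) e2 = ff - e2 + e1 + e9 := by
    simp only [LinearMap.comp_apply, ht2, map_add, map_sub, haf, ha1, ha2, ha9]
    module
  have c3 : (a ∘ₗ t) e3 = ff - e3 + e1 + e9 := by
    simp only [LinearMap.comp_apply, ht3, map_add, map_sub, haf, ha1, ha3, ha9]
    module
  have c4 : (a ∘ₗ t) e4 = ff - el + e4 + e1 + e7 + e9 := by
    simp only [LinearMap.comp_apply, ht4, map_add, map_sub, haf, ha1, ha4, ha9]
    module
  have c5 : (a ∘ₗ t) e5 = ff - el + e5 + e1 + e7 + e9 := by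
    simp only [LinearMap.comp_apply, ht5, map_add, map_sub, haf, ha1, ha5, ha9]
    module
  have c6 : (a ∘ₗ t) e6 = ff - el + e6 + e1 + e7 + e9 := by
    simp only [LinearMap.comp_apply, ht6, map_add, map_sub, haf, ha1, ha6, ha9]
    module
  have c7 : (a ∘ₗ t) e7 = el - e2 - e3 := by
    simp only [LinearMap.comp_apply, ht7, map_sub, hal, ha1, ha8]
    module
  have c8 : (a ∘ₗ t) e8 = ff - el + e1 + e7 + e8 + e9 := by
    simp only [LinearMap.comp_apply, ht8, map_add, map_sub, haf, hal, ha1, ha7, ha8, ha9]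
    module
  have c9 : (a ∘ₗ t) e9 = e1 := by
    simp only [LinearMap.comp_apply, ht9, map_sub, hal, ha1, ha7]
    module
  have hext : a ∘ₗ t = g := by
    apply LinearMap.ext
    intro x
    conv_lhs => rw [basis_expand x]
    conv_rhs => rw [basis_expand x]
    simp only [map_add, map_smul, c0, c1, c2, c3, c4, c5, c6, c7, c8, c9,
      g_el, g_e1, g_e2, g_e3, g_e4, g_e5, g_e6, g_e7, g_e8, g_e9]
  refine ⟨c0, c1, c2, c3, c4, c5, c6, c7, c8, c9, ?_, ?_, ?_⟩
  · intro x
    rw [hext]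
    show gfun (gfun x) = x
    funext j
    fin_cases j <;> simp [gfun] <;> ring
  · intro x y
    rw [hext]
    show form (gfun x) (gfun y) = form x y
    simp only [form, sum10]
    simp [gfun]
    ring
  · rw [hext]
    exact g_ff
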